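/- Let N be a natural number with N ≥ 2 and let a be a real number with 2 ≤ a ≤ N. Then the tail of the exponential series satisfies ∑_{k=2N²+1}^{∞} a^k / k! ≤ a^{−(N²−N)}. -/

import Mathlib

open Nat

/-- For `N ≥ 2` and `2 ≤ a ≤ N`, the tail of the exponential series satisfies
`∑_{k=2N²+1}^{∞} a^k / k! ≤ a^{−(N²−N)}`. -/
theorem stmt_10 (N : ℕ) (hN : 2 ≤ N) (a : ℝ) (ha : 2 ≤ a) (haN : a ≤ N) :
    ∑' k : ℕ, a ^ (k + (2 * N^2 + 1)) / (Nat.factorial (k + (2 * N^2 + 1)))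
      ≤ (a ^ (N^2 - N))⁻¹ := by
  have ha0 : (0:ℝ) < a := by linarith
  set M : ℕ := 2 * N^2 + 1 with hMdef
  have hNN : N ≤ N^2 := Nat.le_self_pow (by norm_num) N
  have hMfacpos : (0:ℝ) < (M ! : ℝ) := by exact_mod_cast Nat.factorial_pos M
  -- termwise bound
  have hterm : ∀ k : ℕ, a ^ (k + M) / ((k + M)! : ℝ)
      ≤ (a ^ M / (M ! : ℝ)) * (1/2) ^ k := by
    intro k
    have hfac : (M ! : ℝ) * ((M:ℝ) + 1) ^ k ≤ ((k + M)! : ℝ) := by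
      have := Nat.factorial_mul_pow_le_factorial (m := M) (n := k)
      have h' : M + k = k + M := by omega
      rw [h'] at this
      exact_mod_cast this
    have h2a : 2 * a ≤ (M:ℝ) + 1 := by
      have : (N:ℝ) ≤ (N:ℝ)^2 := by exact_mod_cast hNN
      have hM' : ((M:ℝ)) = 2 * (N:ℝ)^2 + 1 := by push_cast [hMdef]; ring
      nlinarith
    have h2a0 : (0:ℝ) ≤ 2 * a := by linarith
    have hpowle : (2 * a) ^ k ≤ ((M:ℝ) + 1) ^ k := pow_le_pow_left₀ h2a0 h2a k
    have hden : (M ! : ℝ) * (2 * a) ^ k ≤ ((k + M)! : ℝ) :=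
      le_trans (by nlinarith [pow_nonneg h2a0 k]) hfac
    have hdenpos : (0:ℝ) < (M ! : ℝ) * (2 * a) ^ k :=
      mul_pos hMfacpos (pow_pos (by linarith) k)
    calc a ^ (k + M) / ((k + M)! : ℝ)
        ≤ a ^ (k + M) / ((M ! : ℝ) * (2 * a) ^ k) :=
          div_le_div_of_nonneg_left (pow_nonneg ha0.le _) hdenpos hden
      _ = (a ^ M / (M ! : ℝ)) * (1/2) ^ k := by
          rw [pow_add]
          field_simp
          rw [← mul_pow]; congr 1; ring
    done
  have hg : Summable (fun k : ℕ => (a ^ M / (M ! : ℝ)) * (1/2) ^ k) :=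
    (summable_geometric_of_lt_one (by norm_num) (by norm_num)).mul_left _
  have hf : Summable (fun k : ℕ => a ^ (k + M) / ((k + M)! : ℝ)) :=
    Summable.of_nonneg_of_le
      (fun k => div_nonneg (pow_nonneg ha0.le _) (Nat.cast_nonneg _)) hterm hg
  have hsum : ∑' k : ℕ, a ^ (k + M) / ((k + M)! : ℝ)
      ≤ (a ^ M / (M ! : ℝ)) * 2 := by
    calc ∑' k : ℕ, a ^ (k + M) / ((k + M)! : ℝ)
        ≤ ∑' k : ℕ, (a ^ M / (M ! : ℝ)) * (1/2) ^ k := Summable.tsum_le_tsum hterm hf hg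
      _ = (a ^ M / (M ! : ℝ)) * 2 := by
          rw [tsum_mul_left, tsum_geometric_of_lt_one (by norm_num) (by norm_num)]
          norm_num
  refine hsum.trans ?_
  -- final arithmetic: 2 * a^M * a^(N^2-N) ≤ M !
  have hkey : 2 * a ^ M * a ^ (N^2 - N) ≤ (M ! : ℝ) := by
    have hnat : 2 * N ^ (M + (N^2 - N)) ≤ M ! := by
      have h1 : (N^2)! * (N^2+1)^(N^2+1) ≤ M ! := by
        have := Nat.factorial_mul_pow_le_factorial (m := N^2) (n := N^2+1)
        have h' : N^2 + (N^2+1) = M := by omega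
        rwa [h'] at this
      have h2 : N ! * (N+1)^(N^2 - N) ≤ (N^2)! := by
        have := Nat.factorial_mul_pow_le_factorial (m := N) (n := N^2 - N)
        have h' : N + (N^2 - N) = N^2 := by omega
        rwa [h'] at this
      have h3 : 2 ≤ N ! := by
        calc 2 = 2 ! := rfl
        _ ≤ N ! := Nat.factorial_le hN
      have h4 : N ^ (N^2 - N) ≤ (N+1) ^ (N^2 - N) :=
        Nat.pow_le_pow_left (by omega) _
      have h5 : N ^ (2 * N^2 + 2) ≤ (N^2+1) ^ (N^2+1) := by
        calc N ^ (2 * N^2 + 2) = (N^2) ^ (N^2+1) := by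
              rw [← pow_mul]; ring_nf
          _ ≤ (N^2+1) ^ (N^2+1) := Nat.pow_le_pow_left (by omega) _
      have hE : M + (N^2 - N) ≤ (N^2 - N) + (2 * N^2 + 2) := by omega
      calc 2 * N ^ (M + (N^2 - N))
          ≤ 2 * N ^ ((N^2 - N) + (2 * N^2 + 2)) :=
            Nat.mul_le_mul_left 2 (Nat.pow_le_pow_right (by omega) hE)
        _ = (2 * N ^ (N^2 - N)) * N ^ (2 * N^2 + 2) := by rw [pow_add]; ring
        _ ≤ (N ! * (N+1) ^ (N^2 - N)) * (N^2+1) ^ (N^2+1) :=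
            Nat.mul_le_mul (Nat.mul_le_mul h3 h4) h5
        _ ≤ (N^2)! * (N^2+1)^(N^2+1) := Nat.mul_le_mul_right _ h2
        _ ≤ M ! := h1
    have hcast : (2:ℝ) * (N:ℝ) ^ (M + (N^2 - N)) ≤ (M ! : ℝ) := by exact_mod_cast hnat
    have haNpow : a ^ (M + (N^2 - N)) ≤ (N:ℝ) ^ (M + (N^2 - N)) :=
      pow_le_pow_left₀ ha0.le haN _
    calc 2 * a ^ M * a ^ (N^2 - N) = 2 * a ^ (M + (N^2 - N)) := by
          rw [pow_add]; ring
      _ ≤ 2 * (N:ℝ) ^ (M + (N^2 - N)) := by linarith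
      _ ≤ (M ! : ℝ) := hcast
  have hapow : (0:ℝ) < a ^ (N^2 - N) := pow_pos ha0 _
  rw [div_mul_eq_mul_div, div_le_iff₀ hMfacpos, inv_mul_eq_div, le_div_iff₀ hapow] at *
  nlinarith [hkey]
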